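/- arXiv:1507.07676 — 2 statements merged into one kernel-verified Lean document; each statement's English description precedes it below -/
import Mathlib

section
/- Let A1 and A2 be finite-dimensional algebras over a field K and Φ : A1 → A2 a surjective algebra homomorphism whose kernel is spanned as a K-vector space by an idempotent. Then semisimplicity of A2 implies semisimplicity of A1. -/
/-- Let `A₁` and `A₂` be finite-dimensional algebras over a field `K` and
`Φ : A₁ → A₂` a surjective algebra homomorphism whose kernel is spanned as a `K`-vector space by
an idempotent. Then semisimplicity of `A₂` implies semisimplicity of `A₁`. -/
theorem stmt_1 (K A₁ A₂ : Type*) [Field K]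
    [Ring A₁] [Algebra K A₁] [FiniteDimensional K A₁]
    [Ring A₂] [Algebra K A₂] [FiniteDimensional K A₂]
    (Φ : A₁ →ₐ[K] A₂) (hsurj : Function.Surjective Φ)
    (e : A₁) (hne : e ≠ 0) (he : e * e = e)
    (hker : ∀ x : A₁, Φ x = 0 ↔ ∃ c : K, x = c • e) :
    IsSemisimpleRing A₂ → IsSemisimpleRing A₁ := by
  intro hA₂
  have hΦe : Φ e = 0 := (hker e).2 ⟨1, by simp⟩
  -- uniqueness of coefficients
  have huniq : ∀ a b : K, a • e = b • e → a = b := by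
    intro a b hab
    have : (a - b) • e = 0 := by rw [sub_smul, hab, sub_self]
    rcases smul_eq_zero.1 this with h | h
    · exact sub_eq_zero.1 h
    · exact absurd h hne
  -- e * x lies in the kernel for all x
  have hcex : ∀ x : A₁, ∃ c : K, e * x = c • e := by
    intro x
    exact (hker (e * x)).1 (by rw [map_mul, hΦe, zero_mul])
  choose c hc using hcex
  -- basic properties of c
  have hc1 : c 1 = 1 := huniq _ _ (by rw [← hc 1, mul_one, one_smul])
  have hcadd : ∀ x y, c (x + y) = c x + c y := by
    intro x y
    refine huniq _ _ ?_
    rw [← hc (x + y), mul_add, hc x, hc y, add_smul]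
  have hcmul : ∀ x y, c (x * y) = c x * c y := by
    intro x y
    refine huniq _ _ ?_
    rw [← hc (x * y), ← mul_assoc, hc x, smul_mul_assoc, hc y, smul_smul]
  -- the ring hom A₁ → K × A₂
  let f : A₁ →+* K × A₂ :=
    { toFun := fun x => (c x, Φ x)
      map_one' := by simp [hc1]
      map_mul' := by intro x y; simp [hcmul, Prod.ext_iff]
      map_zero' := by
        have : c 0 = 0 := huniq _ _ (by rw [← hc 0, mul_zero, zero_smul])
        simp [this, Prod.ext_iff]
      map_add' := by intro x y; simp [hcadd, Prod.ext_iff] }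
  have hinj : Function.Injective f := by
    intro x y hxy
    have h1 : c x = c y := congrArg Prod.fst hxy
    have h2 : Φ x = Φ y := congrArg Prod.snd hxy
    have : Φ (x - y) = 0 := by rw [map_sub, h2, sub_self]
    obtain ⟨d, hd⟩ := (hker _).1 this
    -- c (x - y) = d, but also c (x - y) = 0
    have hcsub : c (x - y) = c x - c y := by
      have := hcadd (x - y) y
      rw [sub_add_cancel] at this
      exact eq_sub_of_add_eq this.symm
    have hd0 : c (x - y) = d := by
      refine huniq _ _ ?_
      rw [← hc (x - y), hd, mul_smul_comm, he]
    have : d = 0 := by rw [← hd0, hcsub, h1, sub_self]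
    rw [this, zero_smul] at hd
    exact sub_eq_zero.1 hd
  have hsurjf : Function.Surjective f := by
    rintro ⟨k, a⟩
    obtain ⟨x, hx⟩ := hsurj a
    refine ⟨x - e * x + k • e, ?_⟩
    have hΦ : Φ (x - e * x + k • e) = a := by
      rw [map_add, map_sub, map_mul, hΦe, zero_mul, map_smul, hΦe, smul_zero,
        add_zero, sub_zero, hx]
    have hcval : c (x - e * x + k • e) = k := by
      refine huniq _ _ ?_
      rw [← hc (x - e * x + k • e)]
      rw [mul_add, mul_sub, ← mul_assoc, he, sub_self, zero_add, mul_smul_comm, he]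
    exact Prod.ext hcval hΦ
  let E : A₁ ≃+* K × A₂ := RingEquiv.ofBijective f ⟨hinj, hsurjf⟩
  exact E.symm.isSemisimpleRing
end

section
/- Let K be a field, let d ∈ ℤ_{>0}, and let λ = (λ_1 ≥ ... ≥ λ_m ≥ 0) be a partition of d regarded as a dominant integral gl_m-weight. Let ρ = (m−1, m−2, ..., 1, 0). Suppose char(K) = p > d. Then for every pair 1 ≤ i < j ≤ m and every k ∈ ℤ_{>0} with kp < j − i + λ_i − λ_j, the vector μ = λ + ρ − kp(ε_i − ε_j) has two equal coordinates (i.e., there exist indices a ≠ b with μ_a = μ_b). -/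
/-- Let `K` be a field, `d ∈ ℤ_{>0}`, and `λ = (λ_1 ≥ ... ≥ λ_m ≥ 0)` a
partition of `d` regarded as a dominant integral `gl_m`-weight. Let `ρ = (m−1, m−2, ..., 1, 0)`.
Suppose `char(K) = p > d`. Then for every pair `1 ≤ i < j ≤ m` and every `k ∈ ℤ_{>0}` with
`kp < j − i + λ_i − λ_j`, the vector `μ = λ + ρ − kp(ε_i − ε_j)` has two equal coordinates.
(Indices here are `0`-based: the coordinate of `ρ` at `a : Fin m` is `m − 1 − a`.) -/
theorem stmt_6 (K : Type*) [Field K] (p d m : ℕ) [CharP K p] (hp : p.Prime) (hdp : d < p)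
    (hd : 0 < d) (lam : Fin m → ℕ) (hmono : Antitone lam) (hsum : ∑ a, lam a = d)
    (i j : Fin m) (hij : i < j) (k : ℕ) (hk : 0 < k)
    (hlt : (k * p : ℤ) < ((j : ℕ) : ℤ) - ((i : ℕ) : ℤ) + (lam i : ℤ) - (lam j : ℤ)) :
    ∃ a b : Fin m, a ≠ b ∧
      ((lam a : ℤ) + ((m : ℤ) - 1 - ((a : ℕ) : ℤ))
          - (if a = i then (k * p : ℤ) else 0) + (if a = j then (k * p : ℤ) else 0))
        = ((lam b : ℤ) + ((m : ℤ) - 1 - ((b : ℕ) : ℤ))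
          - (if b = i then (k * p : ℤ) else 0) + (if b = j then (k * p : ℤ) else 0)) := by
  have hli_le : lam i ≤ d := by
    rw [← hsum]
    exact Finset.single_le_sum (fun c _ => Nat.zero_le _) (Finset.mem_univ i)
  have hpkp : p ≤ k * p := Nat.le_mul_of_pos_left p hk
  -- t = k*p + lam j - lam i, with k*p > lam i
  have hkpd : d < k * p := lt_of_lt_of_le hdp hpkp
  set t : ℕ := k * p + lam j - lam i with ht
  have htval : (t : ℤ) = (k * p : ℤ) + lam j - lam i := by
    have : lam i ≤ k * p + lam j := by omega
    omega
  have hjm : (j : ℕ) < m := j.isLt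
  have hiaj : (i : ℕ) + t < (j : ℕ) := by omega
  have htpos : 0 < t := by omega
  have ham : (i : ℕ) + t < m := by omega
  set a : Fin m := ⟨(i : ℕ) + t, ham⟩ with ha
  have hane_i : a ≠ i := by
    intro h
    have := congrArg Fin.val h
    simp [ha] at this
    omega
  have hane_j : a ≠ j := by
    intro h
    have := congrArg Fin.val h
    simp [ha] at this
    omega
  have hine_j : i ≠ j := Fin.ne_of_lt hij
  have haj : a ≤ j := by
    rw [Fin.le_def]
    simpa [ha] using le_of_lt hiaj
  have hja : lam j ≤ lam a := hmono haj
  -- key: lam a ≤ lam j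
  have hkey : lam a ≤ lam j := by
    by_contra hcon
    push_neg at hcon
    have hia : i ≤ a := by
      rw [Fin.le_def]; simp [ha]
    -- sum over insert i (Ioc i a)
    have hcard : (Finset.Ioc i a).card = t := by
      rw [Fin.card_Ioc]; simp [ha]
    have hsum1 : (Finset.Ioc i a).card • (lam j + 1) ≤ ∑ c ∈ Finset.Ioc i a, lam c := by
      apply Finset.card_nsmul_le_sum
      intro c hc
      rw [Finset.mem_Ioc] at hc
      have : lam a ≤ lam c := hmono hc.2
      omega
    rw [smul_eq_mul] at hsum1
    have hnotmem : i ∉ Finset.Ioc i a := by simp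
    have hsub : insert i (Finset.Ioc i a) ⊆ Finset.univ := Finset.subset_univ _
    have hsum2 : ∑ c ∈ insert i (Finset.Ioc i a), lam c ≤ d := by
      rw [← hsum]
      exact Finset.sum_le_sum_of_subset hsub
    rw [Finset.sum_insert hnotmem] at hsum2
    rw [hcard] at hsum1
    have h2 : t ≤ t * (lam j + 1) := Nat.le_mul_of_pos_right t (by omega)
    omega
  have heq : lam a = lam j := le_antisymm hkey hja
  refine ⟨a, i, hane_i, ?_⟩
  simp only [hane_i, hane_j, hine_j, if_neg, if_pos, ite_true, ite_false]
  rw [heq]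
  push_cast
  have hav : ((⟨(i : ℕ) + t, ham⟩ : Fin m) : ℕ) = (i : ℕ) + t := rfl
  have hav' : (a : ℕ) = (i : ℕ) + t := rfl
  omega
end
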